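/- The 4-dimensional complex Lie algebra 𝔯₂(ℂ) ⊕ 𝔯₂(ℂ) has vanishing Chevalley–Eilenberg cohomology H²(𝔤, 𝔤) = 0 with coefficients in the adjoint representation (it is rigid). -/
import Mathlib
set_option maxHeartbeats 1000000


/- STATEMENT 19: The 4-dimensional complex Lie algebra `𝔯₂(ℂ) ⊕ 𝔯₂(ℂ)` (on ℂ⁴ with
`[w₁,w₂] = w₁`, `[w₃,w₄] = w₃`) has vanishing second Chevalley–Eilenberg cohomology
with adjoint coefficients: every alternating bilinear 2-cocycle is the coboundary of
a linear 1-cochain, i.e. `H²(𝔤,𝔤) = 0` (the algebra is rigid). -/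

/-- The bracket of `𝔯₂(ℂ) ⊕ 𝔯₂(ℂ)` on `ℂ⁴`: `[w₁,w₂] = w₁`, `[w₃,w₄] = w₃`. -/
def r2r2 (x y : Fin 4 → ℂ) : Fin 4 → ℂ :=
  ![x 0 * y 1 - x 1 * y 0, 0, x 2 * y 3 - x 3 * y 2, 0]

noncomputable def Rbil : (Fin 4 → ℂ) →ₗ[ℂ] (Fin 4 → ℂ) →ₗ[ℂ] (Fin 4 → ℂ) :=
  LinearMap.mk₂ ℂ r2r2
    (fun x x' y => by funext m; fin_cases m <;> simp [r2r2] <;> ring)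
    (fun c x y => by funext m; fin_cases m <;> simp [r2r2] <;> ring)
    (fun x y y' => by funext m; fin_cases m <;> simp [r2r2] <;> ring)
    (fun c x y => by funext m; fin_cases m <;> simp [r2r2] <;> ring)

theorem r2r2_H2_vanishes
    (φ : (Fin 4 → ℂ) →ₗ[ℂ] (Fin 4 → ℂ) →ₗ[ℂ] (Fin 4 → ℂ))
    (halt : ∀ x, φ x x = 0)
    (hcocycle : ∀ x y z,
      r2r2 x (φ y z) - r2r2 y (φ x z) + r2r2 z (φ x y)
        - φ (r2r2 x y) z + φ (r2r2 x z) y - φ (r2r2 y z) x = 0) :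
    ∃ lam : (Fin 4 → ℂ) →ₗ[ℂ] (Fin 4 → ℂ),
      ∀ x y, φ x y = r2r2 x (lam y) - r2r2 y (lam x) - lam (r2r2 x y) := by
  classical
  have hanti : ∀ x y, φ y x = -φ x y := by
    intro x y
    have h := halt (x + y)
    simp only [map_add, LinearMap.add_apply, halt, zero_add, add_zero] at h
    linear_combination (norm := module) h
  have b01 : r2r2 ![1,0,0,0] ![0,1,0,0] = ![1,0,0,0] := by
    funext m; fin_cases m <;> simp [r2r2]
  have b02 : r2r2 ![1,0,0,0] ![0,0,1,0] = 0 := by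
    funext m; fin_cases m <;> simp [r2r2]
  have b03 : r2r2 ![1,0,0,0] ![0,0,0,1] = 0 := by
    funext m; fin_cases m <;> simp [r2r2]
  have b12 : r2r2 ![0,1,0,0] ![0,0,1,0] = 0 := by
    funext m; fin_cases m <;> simp [r2r2]
  have b13 : r2r2 ![0,1,0,0] ![0,0,0,1] = 0 := by
    funext m; fin_cases m <;> simp [r2r2]
  have b23 : r2r2 ![0,0,1,0] ![0,0,0,1] = ![0,0,1,0] := by
    funext m; fin_cases m <;> simp [r2r2]
  have E012 := hcocycle ![1,0,0,0] ![0,1,0,0] ![0,0,1,0]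
  have E013 := hcocycle ![1,0,0,0] ![0,1,0,0] ![0,0,0,1]
  have E023 := hcocycle ![1,0,0,0] ![0,0,1,0] ![0,0,0,1]
  have E123 := hcocycle ![0,1,0,0] ![0,0,1,0] ![0,0,0,1]
  rw [b01, b02, b12] at E012
  rw [b01, b03, b13] at E013
  rw [b02, b03, b23] at E023
  rw [b12, b13, b23] at E123
  simp only [map_zero, LinearMap.zero_apply] at E012 E013 E023 E123
  have ha10 := hanti ![1,0,0,0] ![0,1,0,0]
  have ha20 := hanti ![1,0,0,0] ![0,0,1,0]
  have ha30 := hanti ![1,0,0,0] ![0,0,0,1]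
  have ha21 := hanti ![0,1,0,0] ![0,0,1,0]
  have ha31 := hanti ![0,1,0,0] ![0,0,0,1]
  have ha32 := hanti ![0,0,1,0] ![0,0,0,1]
  have hd0 := halt (![1,0,0,0] : Fin 4 → ℂ)
  have hd1 := halt (![0,1,0,0] : Fin 4 → ℂ)
  have hd2 := halt (![0,0,1,0] : Fin 4 → ℂ)
  have hd3 := halt (![0,0,0,1] : Fin 4 → ℂ)
  have h1 := congrFun E123 1
  have h2 := congrFun E012 1
  have h3 := congrFun E012 2
  have h4 := congrFun E012 3
  have h5 := congrFun E013 0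
  have h6 := congrFun E013 1
  have h7 := congrFun E013 2
  have h8 := congrFun E013 3
  have h9 := congrFun E023 0
  have h10 := congrFun E123 2
  have h11 := congrFun E123 3
  have h12 := congrFun E123 0
  have h13 := congrFun E012 0
  have h14 := congrFun E023 1
  have h15 := congrFun E023 2
  have h16 := congrFun E023 3
  simp only [Pi.sub_apply, Pi.add_apply, Pi.neg_apply, Pi.zero_apply, r2r2,
    Matrix.cons_val_zero, Matrix.cons_val_one, Matrix.head_cons, Matrix.cons_val_two,
    Matrix.tail_cons, Matrix.cons_val_three, Matrix.head_fin_const, mul_zero, mul_one,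
    zero_mul, one_mul, sub_zero, zero_sub, sub_self, add_zero, zero_add, neg_zero, ha10, ha20, ha30, ha21, ha31, ha32]
    at h1 h2 h3 h4 h5 h6 h7 h8 h9 h10 h11 h12 h13 h14 h15 h16
  set L : Matrix (Fin 4) (Fin 4) ℂ :=
    !![0, 0, -(φ ![0,1,0,0] ![0,0,1,0] 0), -(φ ![0,1,0,0] ![0,0,0,1] 0);
       -(φ ![1,0,0,0] ![0,1,0,0] 1), φ ![1,0,0,0] ![0,1,0,0] 0, φ ![1,0,0,0] ![0,0,1,0] 0, φ ![1,0,0,0] ![0,0,0,1] 0;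
       -(φ ![1,0,0,0] ![0,1,0,0] 2), φ ![0,1,0,0] ![0,0,0,1] 2, 0, 0;
       -(φ ![1,0,0,0] ![0,1,0,0] 3), -(φ ![0,1,0,0] ![0,0,1,0] 2), -(φ ![0,0,1,0] ![0,0,0,1] 3), φ ![0,0,1,0] ![0,0,0,1] 2] with hL
  set lam : (Fin 4 → ℂ) →ₗ[ℂ] (Fin 4 → ℂ) := L.mulVecLin with hlam
  set Ψ : (Fin 4 → ℂ) →ₗ[ℂ] (Fin 4 → ℂ) →ₗ[ℂ] (Fin 4 → ℂ) :=
    Rbil.compl₂ lam - (Rbil.compl₂ lam).flip - Rbil.compr₂ lam with hΨ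
  have hΨapp : ∀ x y, Ψ x y = r2r2 x (lam y) - r2r2 y (lam x) - lam (r2r2 x y) := by
    intro x y
    simp [hΨ, LinearMap.sub_apply, LinearMap.compl₂_apply, LinearMap.flip_apply,
      LinearMap.compr₂_apply, Rbil, LinearMap.mk₂_apply]
  have key : φ = Ψ := by
    have s0 : Pi.single (0 : Fin 4) (1 : ℂ) = (![1,0,0,0] : Fin 4 → ℂ) := by
      funext m; fin_cases m <;> simp [Pi.single_apply]
    have s1 : Pi.single (1 : Fin 4) (1 : ℂ) = (![0,1,0,0] : Fin 4 → ℂ) := by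
      funext m; fin_cases m <;> simp [Pi.single_apply]
    have s2 : Pi.single (2 : Fin 4) (1 : ℂ) = (![0,0,1,0] : Fin 4 → ℂ) := by
      funext m; fin_cases m <;> simp [Pi.single_apply]
    have s3 : Pi.single (3 : Fin 4) (1 : ℂ) = (![0,0,0,1] : Fin 4 → ℂ) := by
      funext m; fin_cases m <;> simp [Pi.single_apply]
    apply LinearMap.ext_basis (Pi.basisFun ℂ (Fin 4)) (Pi.basisFun ℂ (Fin 4))
    intro i j
    fin_cases i <;> fin_cases j <;>
      simp only [Pi.basisFun_apply, Fin.zero_eta, Fin.mk_one, Fin.reduceFinMk, Fin.isValue,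
        s0, s1, s2, s3] <;>
      rw [hΨapp] <;>
      funext m <;> fin_cases m <;>
      simp only [hlam, hL, Pi.sub_apply, Matrix.mulVecLin_apply, Matrix.mulVec,
        dotProduct, Fin.sum_univ_four, r2r2,
        hd0, hd1, hd2, hd3, ha10, ha20, ha30, ha21, ha31, ha32,
        Matrix.cons_val_zero, Matrix.cons_val_one, Matrix.head_cons, Matrix.cons_val_two,
        Matrix.tail_cons, Matrix.cons_val_three, Matrix.head_fin_const, Matrix.cons_val',
        Matrix.cons_val_fin_one, Matrix.empty_val', Matrix.of_apply, Pi.neg_apply,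
        Pi.zero_apply, LinearMap.zero_apply, map_zero, map_neg, LinearMap.neg_apply,
        Fin.zero_eta, Fin.mk_one, Fin.reduceFinMk, Fin.isValue,
        mul_zero, zero_mul, mul_one, one_mul, sub_zero, zero_sub, sub_self, add_zero,
        zero_add, neg_zero, neg_neg] <;>
      first
        | rfl
        | (norm_num; done)
        | linear_combination h1 | linear_combination -h1
        | linear_combination h2 | linear_combination -h2
        | linear_combination h3 | linear_combination -h3
        | linear_combination h4 | linear_combination -h4
        | linear_combination h5 | linear_combination -h5
        | linear_combination h6 | linear_combination -h6
        | linear_combination h7 | linear_combination -h7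
        | linear_combination h8 | linear_combination -h8
        | linear_combination h9 | linear_combination -h9
        | linear_combination h10 | linear_combination -h10
        | linear_combination h11 | linear_combination -h11
        | linear_combination h12 | linear_combination -h12
        | linear_combination h13 | linear_combination -h13
        | linear_combination h14 | linear_combination -h14
        | linear_combination h15 | linear_combination -h15
        | linear_combination h16 | linear_combination -h16
  exact ⟨lam, fun x y => by rw [LinearMap.congr_fun (LinearMap.congr_fun key x) y, hΨapp]⟩
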